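/- For periodic sequences: let (Y_ℓ)_{ℓ∈ℤ} be i.i.d. N(0,σ²), n ≥ 1, and X[m] = exp((2πi/ε) Σ_{ℓ=−m}^{m} Y_ℓ) for 0 ≤ m ≤ n−1 (indices taken so all sums make sense). Then the expected periodic autocorrelation E[(1/n) Σ_{m=0}^{n−1} X[m+k] conj(X[m])] equals exp(−k σ² (2π/ε)²) for each integer 1 ≤ k ≤ n−1 (with m+k not reduced mod n). -/

import Mathlib

open MeasureTheory ProbabilityTheory Real
open scoped NNReal ENNReal BigOperators

-- complex independent product of integrals
lemma indep_integral_mul_complex {Ω : Type*} {mΩ : MeasurableSpace Ω} {μ : Measure Ω}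
    [IsProbabilityMeasure μ] {f g : Ω → ℂ} (h : IndepFun f g μ)
    (hf : Integrable f μ) (hg : Integrable g μ) (hfg : Integrable (fun ω => f ω * g ω) μ) :
    ∫ ω, f ω * g ω ∂μ = (∫ ω, f ω ∂μ) * ∫ ω, g ω ∂μ := by
  have hrr : IndepFun (fun ω => (f ω).re) (fun ω => (g ω).re) μ :=
    h.comp Complex.measurable_re Complex.measurable_re
  have hri : IndepFun (fun ω => (f ω).re) (fun ω => (g ω).im) μ :=
    h.comp Complex.measurable_re Complex.measurable_im
  have hir : IndepFun (fun ω => (f ω).im) (fun ω => (g ω).re) μ :=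
    h.comp Complex.measurable_im Complex.measurable_re
  have hii : IndepFun (fun ω => (f ω).im) (fun ω => (g ω).im) μ :=
    h.comp Complex.measurable_im Complex.measurable_im
  have hfre : Integrable (fun ω => (f ω).re) μ := hf.re
  have hfim : Integrable (fun ω => (f ω).im) μ := hf.im
  have hgre : Integrable (fun ω => (g ω).re) μ := hg.re
  have hgim : Integrable (fun ω => (g ω).im) μ := hg.im
  have i1 : Integrable (fun ω => (f ω).re * (g ω).re) μ := hrr.integrable_mul hfre hgre
  have i2 : Integrable (fun ω => (f ω).im * (g ω).im) μ := hii.integrable_mul hfim hgim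
  have i3 : Integrable (fun ω => (f ω).re * (g ω).im) μ := hri.integrable_mul hfre hgim
  have i4 : Integrable (fun ω => (f ω).im * (g ω).re) μ := hir.integrable_mul hfim hgre
  have e1 : ∫ ω, (f ω).re * (g ω).re ∂μ = (∫ ω, (f ω).re ∂μ) * ∫ ω, (g ω).re ∂μ :=
    hrr.integral_fun_mul_eq_mul_integral hfre.1 hgre.1
  have e2 : ∫ ω, (f ω).im * (g ω).im ∂μ = (∫ ω, (f ω).im ∂μ) * ∫ ω, (g ω).im ∂μ :=
    hii.integral_fun_mul_eq_mul_integral hfim.1 hgim.1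
  have e3 : ∫ ω, (f ω).re * (g ω).im ∂μ = (∫ ω, (f ω).re ∂μ) * ∫ ω, (g ω).im ∂μ :=
    hri.integral_fun_mul_eq_mul_integral hfre.1 hgim.1
  have e4 : ∫ ω, (f ω).im * (g ω).re ∂μ = (∫ ω, (f ω).im ∂μ) * ∫ ω, (g ω).re ∂μ :=
    hir.integral_fun_mul_eq_mul_integral hfim.1 hgre.1
  rw [← integral_re_add_im hfg, ← integral_re_add_im hf, ← integral_re_add_im hg]
  have hre : (fun ω => RCLike.re ((fun ω => f ω * g ω) ω)) =
      fun ω => (f ω).re * (g ω).re - (f ω).im * (g ω).im := by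
    funext ω; simp [Complex.mul_re]
  have him : (fun ω => RCLike.im ((fun ω => f ω * g ω) ω)) =
      fun ω => (f ω).re * (g ω).im + (f ω).im * (g ω).re := by
    funext ω; simp [Complex.mul_im]
  have hre2 : (∫ ω, RCLike.re (f ω * g ω) ∂μ) = ∫ ω, ((f ω).re * (g ω).re - (f ω).im * (g ω).im) ∂μ :=
    integral_congr_ae (Filter.Eventually.of_forall fun ω => by simp [Complex.mul_re])
  have him2 : (∫ ω, RCLike.im (f ω * g ω) ∂μ) = ∫ ω, ((f ω).re * (g ω).im + (f ω).im * (g ω).re) ∂μ :=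
    integral_congr_ae (Filter.Eventually.of_forall fun ω => by simp [Complex.mul_im])
  rw [hre2, him2, integral_sub i1 i2, integral_add i3 i4, e1, e2, e3, e4]
  simp only [RCLike.I_to_complex, RCLike.re_to_complex, RCLike.im_to_complex]
  push_cast
  simp only [Complex.ext_iff, Complex.add_re, Complex.add_im, Complex.mul_re, Complex.mul_im,
    Complex.sub_re, Complex.sub_im, Complex.I_re, Complex.I_im, Complex.ofReal_re,
    Complex.ofReal_im]
  constructor <;> ring

lemma char_gauss {v : ℝ≥0} (hv : v ≠ 0) (t : ℝ) :
    ∫ x : ℝ, Complex.exp ((t : ℂ) * Complex.I * x) ∂(gaussianReal 0 v) =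
      ((Real.exp (-(v : ℝ) * t ^ 2 / 2) : ℝ) : ℂ) := by
  have hv' : (0:ℝ) < (v:ℝ) := lt_of_le_of_ne (v.coe_nonneg) (by exact_mod_cast (Ne.symm hv))
  have hvc : ((v:ℝ):ℂ) ≠ 0 := by exact_mod_cast hv'.ne'
  rw [gaussianReal_of_var_ne_zero _ hv]
  have hd : gaussianPDF 0 v = fun x => (↑(Real.toNNReal (gaussianPDFReal 0 v x)) : ℝ≥0∞) := by
    funext x; simp [gaussianPDF, ENNReal.ofReal]
  rw [hd, integral_withDensity_eq_integral_smul (measurable_gaussianPDFReal 0 v).real_toNNReal]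
  set b : ℂ := ((-(2*(v:ℝ))⁻¹ : ℝ) : ℂ) with hb
  have hbre : b.re < 0 := by
    rw [hb, Complex.ofReal_re]
    simp only [neg_neg, Left.neg_neg_iff, neg_lt, neg_zero]
    positivity
  have key : ∀ x : ℝ, (Real.toNNReal (gaussianPDFReal 0 v x)) • Complex.exp ((t:ℂ)*Complex.I*x)
      = (((Real.sqrt (2*π*v))⁻¹ : ℝ) : ℂ) *
        Complex.exp (b * (x:ℂ)^2 + ((t:ℂ)*Complex.I) * (x:ℂ) + 0) := by
    intro x
    rw [NNReal.smul_def, Real.coe_toNNReal _ (gaussianPDFReal_nonneg _ _ _), Complex.real_smul,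
      gaussianPDFReal]
    push_cast
    rw [mul_assoc, ← Complex.exp_add]
    congr 2
    rw [hb]
    push_cast
    field_simp
    ring
  simp_rw [key]
  rw [integral_const_mul, integral_cexp_quadratic hbre]
  have h1 : ((π : ℂ)) / -b = ((2*π*(v:ℝ) : ℝ) : ℂ) := by
    rw [hb]
    push_cast
    field_simp
  have h2 : ((2*π*(v:ℝ) : ℝ) : ℂ) ^ (1/2 : ℂ) = ((Real.sqrt (2*π*(v:ℝ)) : ℝ) : ℂ) := by
    have h0 : (0:ℝ) ≤ 2*π*(v:ℝ) := by positivity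
    rw [show (1/2 : ℂ) = ((1/2 : ℝ) : ℂ) by norm_num, ← Complex.ofReal_cpow h0,
      ← Real.sqrt_eq_rpow]
  have h4 : (0 : ℂ) - ((t:ℂ)*Complex.I)^2/(4*b) = ((-(v:ℝ)*t^2/2 : ℝ) : ℂ) := by
    rw [hb]
    push_cast
    rw [mul_pow, Complex.I_sq]
    field_simp
    ring
  rw [h1, h2, h4, ← Complex.ofReal_exp, ← mul_assoc, ← Complex.ofReal_mul]
  rw [inv_mul_cancel₀ (by positivity : Real.sqrt (2*π*(v:ℝ)) ≠ 0), Complex.ofReal_one, one_mul]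

lemma integrable_of_norm_eq_one {Ω : Type*} {mΩ : MeasurableSpace Ω} {μ : Measure Ω}
    [IsProbabilityMeasure μ] {f : Ω → ℂ} (hm : AEStronglyMeasurable f μ)
    (hb : ∀ ω, ‖f ω‖ ≤ 1) : Integrable f μ :=
  Integrable.mono' (integrable_const 1) hm (Filter.Eventually.of_forall hb)

lemma integral_prod_cexp {Ω : Type*} {mΩ : MeasurableSpace Ω} {μ : Measure Ω}
    [IsProbabilityMeasure μ]
    (Y : ℤ → Ω → ℝ) (hmeas : ∀ ℓ, Measurable (Y ℓ))
    (hindep : iIndepFun Y μ) (t : ℝ) (T : Finset ℤ) :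
    ∫ ω, ∏ ℓ ∈ T, Complex.exp ((t:ℂ) * Complex.I * (Y ℓ ω)) ∂μ
      = ∏ ℓ ∈ T, ∫ ω, Complex.exp ((t:ℂ) * Complex.I * (Y ℓ ω)) ∂μ := by
  classical
  set g : ℤ → Ω → ℂ := fun ℓ ω => Complex.exp ((t:ℂ) * Complex.I * (Y ℓ ω)) with hg
  have hφm : Measurable (fun y : ℝ => Complex.exp ((t:ℂ) * Complex.I * (y:ℂ))) :=
    Complex.measurable_exp.comp (measurable_const.mul Complex.measurable_ofReal)
  have hgm : ∀ ℓ, Measurable (g ℓ) := fun ℓ => hφm.comp (hmeas ℓ)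
  have hgn : ∀ ℓ ω, ‖g ℓ ω‖ = 1 := by
    intro ℓ ω
    rw [hg]
    simp only [Complex.norm_exp]
    have : ((t:ℂ) * Complex.I * ((Y ℓ ω : ℝ) : ℂ)).re = 0 := by
      simp [Complex.mul_re, Complex.mul_im]
    rw [this, Real.exp_zero]
  have hgind : iIndepFun g μ :=
    hindep.comp (fun _ => fun y : ℝ => Complex.exp ((t:ℂ) * Complex.I * (y:ℂ))) fun _ => hφm
  induction T using Finset.induction_on with
  | empty => simp
  | @insert a s ha ih =>
    simp_rw [Finset.prod_insert ha]
    have hPm : Measurable (fun ω => ∏ ℓ ∈ s, g ℓ ω) :=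
      Finset.measurable_prod _ fun ℓ _ => hgm ℓ
    have hPn : ∀ ω, ‖∏ ℓ ∈ s, g ℓ ω‖ ≤ 1 := by
      intro ω
      rw [norm_prod]
      simp_rw [hgn]
      simp
    have hindep' : IndepFun (g a) (fun ω => ∏ ℓ ∈ s, g ℓ ω) μ := by
      have h := hgind.indepFun_finsetProd_of_notMem hgm ha
      have he : (∏ j ∈ s, g j) = fun ω => ∏ ℓ ∈ s, g ℓ ω := by
        funext ω; simp [Finset.prod_apply]
      rw [he] at h
      exact h.symm
    have i1 : Integrable (g a) μ :=
      integrable_of_norm_eq_one (hgm a).aestronglyMeasurable fun ω => le_of_eq (hgn a ω)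
    have i2 : Integrable (fun ω => ∏ ℓ ∈ s, g ℓ ω) μ :=
      integrable_of_norm_eq_one hPm.aestronglyMeasurable hPn
    have i3 : Integrable (fun ω => g a ω * ∏ ℓ ∈ s, g ℓ ω) μ := by
      refine integrable_of_norm_eq_one ((hgm a).mul hPm).aestronglyMeasurable fun ω => ?_
      rw [norm_mul, hgn a ω, one_mul]
      exact hPn ω
    rw [indep_integral_mul_complex hindep' i1 i2 i3, ih]
theorem expected_periodic_autocorrelation
    {Ω : Type*} [MeasureSpace Ω] [IsProbabilityMeasure (ℙ : Measure Ω)]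
    (ε : ℝ) (hε : 0 < ε) (σ : ℝ≥0) (hσ : 0 < σ)
    (Y : ℤ → Ω → ℝ)
    (hmeas : ∀ ℓ, Measurable (Y ℓ))
    (hindep : iIndepFun Y ℙ)
    (hlaw : ∀ ℓ, Measure.map (Y ℓ) ℙ = gaussianReal 0 (σ ^ 2))
    (X : ℤ → Ω → ℂ)
    (hX : ∀ n ω, X n ω =
      Complex.exp ((2 * Real.pi * Complex.I / ε) *
        ((∑ ℓ ∈ Finset.Icc (-n) n, Y ℓ ω : ℝ) : ℂ)))
    (n : ℕ) (hn : 1 ≤ n) (k : ℤ) (hk1 : 1 ≤ k) (hk2 : k ≤ (n : ℤ) - 1) :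
    ∫ ω, (1 / (n : ℂ)) * ∑ m ∈ Finset.range n,
        X ((m : ℤ) + k) ω * (starRingEnd ℂ) (X (m : ℤ) ω) ∂ℙ =
      ((Real.exp (-(k : ℝ) * (σ : ℝ) ^ 2 * (2 * Real.pi / ε) ^ 2) : ℝ) : ℂ) := by
  classical
  set t : ℝ := 2 * Real.pi / ε with ht
  have hεc : (ε : ℂ) ≠ 0 := by exact_mod_cast hε.ne'
  have hcoef : (2 * (Real.pi : ℂ) * Complex.I / (ε : ℂ)) = ((t : ℝ) : ℂ) * Complex.I := by
    rw [ht]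
    push_cast
    field_simp
  -- the single-variable characteristic function
  have hσ2 : (σ ^ 2 : ℝ≥0) ≠ 0 := by positivity
  have hone : ∀ ℓ : ℤ, ∫ ω, Complex.exp ((t:ℂ) * Complex.I * (Y ℓ ω)) ∂ℙ =
      ((Real.exp (-((σ:ℝ)^2) * t ^ 2 / 2) : ℝ) : ℂ) := by
    intro ℓ
    have hφm : AEStronglyMeasurable (fun y : ℝ => Complex.exp ((t:ℂ) * Complex.I * (y:ℂ)))
        (Measure.map (Y ℓ) ℙ) :=
      (Complex.measurable_exp.comp (measurable_const.mul Complex.measurable_ofReal)).aestronglyMeasurable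
    rw [← integral_map (hmeas ℓ).aemeasurable hφm, hlaw ℓ, char_gauss hσ2 t]
    norm_num
  -- the set of indices appearing in the increment
  have hTcard : ∀ m : ℕ,
      (Finset.Icc (-(((m:ℤ)) + k)) ((m:ℤ) + k) \ Finset.Icc (-(m:ℤ)) (m:ℤ)).card
        = (2 * k).toNat := by
    intro m
    have hsub : Finset.Icc (-(m:ℤ)) (m:ℤ) ⊆ Finset.Icc (-((m:ℤ) + k)) ((m:ℤ) + k) :=
      Finset.Icc_subset_Icc (by omega) (by omega)
    rw [Finset.card_sdiff_of_subset hsub, Int.card_Icc, Int.card_Icc]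
    omega
  -- pointwise rewriting of the product X[m+k] conj(X[m])
  have hprod : ∀ (m : ℕ) (ω : Ω),
      X ((m : ℤ) + k) ω * (starRingEnd ℂ) (X (m : ℤ) ω) =
        ∏ ℓ ∈ Finset.Icc (-((m:ℤ) + k)) ((m:ℤ) + k) \ Finset.Icc (-(m:ℤ)) (m:ℤ),
          Complex.exp ((t:ℂ) * Complex.I * (Y ℓ ω)) := by
    intro m ω
    have hsub : Finset.Icc (-(m:ℤ)) (m:ℤ) ⊆ Finset.Icc (-((m:ℤ) + k)) ((m:ℤ) + k) :=
      Finset.Icc_subset_Icc (by omega) (by omega)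
    rw [hX, hX, ← Complex.exp_conj, ← Complex.exp_add, ← Complex.exp_sum]
    congr 1
    have hconj : (starRingEnd ℂ) ((2 * (Real.pi:ℂ) * Complex.I / (ε:ℂ)) *
        ((∑ ℓ ∈ Finset.Icc (-(m:ℤ)) (m:ℤ), Y ℓ ω : ℝ) : ℂ)) =
        -((2 * (Real.pi:ℂ) * Complex.I / (ε:ℂ)) *
        ((∑ ℓ ∈ Finset.Icc (-(m:ℤ)) (m:ℤ), Y ℓ ω : ℝ) : ℂ)) := by
      simp only [map_mul, map_div₀, map_ofNat, Complex.conj_ofReal, Complex.conj_I]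
      ring
    rw [hconj, hcoef]
    have hsum : ∑ ℓ ∈ Finset.Icc (-((m:ℤ) + k)) ((m:ℤ) + k) \ Finset.Icc (-(m:ℤ)) (m:ℤ), Y ℓ ω
        = (∑ ℓ ∈ Finset.Icc (-((m:ℤ) + k)) ((m:ℤ) + k), Y ℓ ω)
          - ∑ ℓ ∈ Finset.Icc (-(m:ℤ)) (m:ℤ), Y ℓ ω :=
      Finset.sum_sdiff_eq_sub hsub
    have : ∑ ℓ ∈ Finset.Icc (-((m:ℤ) + k)) ((m:ℤ) + k) \ Finset.Icc (-(m:ℤ)) (m:ℤ),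
        (t:ℂ) * Complex.I * (Y ℓ ω) = ((t:ℂ) * Complex.I) *
        (((∑ ℓ ∈ Finset.Icc (-((m:ℤ) + k)) ((m:ℤ) + k) \ Finset.Icc (-(m:ℤ)) (m:ℤ), Y ℓ ω : ℝ)) : ℂ) := by
      push_cast
      rw [Finset.mul_sum]
    rw [this, hsum]
    push_cast
    ring
  -- value of each summand's integral
  set C : ℂ := ((Real.exp (-(k : ℝ) * (σ : ℝ) ^ 2 * (2 * Real.pi / ε) ^ 2) : ℝ) : ℂ) with hC
  have hIm : ∀ m : ℕ, ∫ ω, X ((m : ℤ) + k) ω * (starRingEnd ℂ) (X (m : ℤ) ω) ∂ℙ = C := by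
    intro m
    have := integral_prod_cexp Y hmeas hindep t
      (Finset.Icc (-((m:ℤ) + k)) ((m:ℤ) + k) \ Finset.Icc (-(m:ℤ)) (m:ℤ))
    calc ∫ ω, X ((m : ℤ) + k) ω * (starRingEnd ℂ) (X (m : ℤ) ω) ∂ℙ
        = ∫ ω, ∏ ℓ ∈ Finset.Icc (-((m:ℤ) + k)) ((m:ℤ) + k) \ Finset.Icc (-(m:ℤ)) (m:ℤ),
            Complex.exp ((t:ℂ) * Complex.I * (Y ℓ ω)) ∂ℙ := by
          exact integral_congr_ae (Filter.Eventually.of_forall fun ω => hprod m ω)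
      _ = ∏ ℓ ∈ Finset.Icc (-((m:ℤ) + k)) ((m:ℤ) + k) \ Finset.Icc (-(m:ℤ)) (m:ℤ),
            ∫ ω, Complex.exp ((t:ℂ) * Complex.I * (Y ℓ ω)) ∂ℙ := this
      _ = ((Real.exp (-((σ:ℝ)^2) * t ^ 2 / 2) : ℝ) : ℂ) ^ (2 * k).toNat := by
          rw [Finset.prod_congr rfl fun ℓ _ => hone ℓ, Finset.prod_const, hTcard m]
      _ = C := by
          rw [hC, ← Complex.ofReal_pow, ← Real.exp_nat_mul]
          congr 1
          have h2k : ((2 * k).toNat : ℝ) = 2 * (k : ℝ) := by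
            have : ((2 * k).toNat : ℤ) = 2 * k := Int.toNat_of_nonneg (by omega)
            exact_mod_cast this
          rw [h2k, ht]
          ring
  -- integrability of each summand
  have hint : ∀ m ∈ Finset.range n,
      Integrable (fun ω => X ((m : ℤ) + k) ω * (starRingEnd ℂ) (X (m : ℤ) ω)) ℙ := by
    intro m _
    have hgm : Measurable (fun ω => ∏ ℓ ∈ Finset.Icc (-((m:ℤ) + k)) ((m:ℤ) + k) \ Finset.Icc (-(m:ℤ)) (m:ℤ),
        Complex.exp ((t:ℂ) * Complex.I * (Y ℓ ω))) :=
      Finset.measurable_prod _ fun ℓ _ =>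
        (Complex.measurable_exp.comp (measurable_const.mul
          (Complex.measurable_ofReal.comp (hmeas ℓ))))
    have heq : (fun ω => X ((m : ℤ) + k) ω * (starRingEnd ℂ) (X (m : ℤ) ω)) =
        fun ω => ∏ ℓ ∈ Finset.Icc (-((m:ℤ) + k)) ((m:ℤ) + k) \ Finset.Icc (-(m:ℤ)) (m:ℤ),
          Complex.exp ((t:ℂ) * Complex.I * (Y ℓ ω)) := funext fun ω => hprod m ω
    rw [heq]
    refine integrable_of_norm_eq_one hgm.aestronglyMeasurable fun ω => ?_
    rw [norm_prod]
    refine le_of_eq (Finset.prod_eq_one fun ℓ _ => ?_)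
    simp only [Complex.norm_exp]
    have : ((t:ℂ) * Complex.I * ((Y ℓ ω : ℝ) : ℂ)).re = 0 := by
      simp [Complex.mul_re, Complex.mul_im]
    rw [this, Real.exp_zero]
  rw [integral_const_mul, integral_finset_sum _ hint,
    Finset.sum_congr rfl fun m _ => hIm m, Finset.sum_const, Finset.card_range]
  have hnc : (n : ℂ) ≠ 0 := by exact_mod_cast (Nat.pos_of_ne_zero (by omega)).ne'
  rw [nsmul_eq_mul]
  field_simp
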